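/- In the graph C_{a,b} with 4 < a < b, the vertex of degree 3 on the cycle of length a receives, at round a of color refinement initialized with vertex degrees, a color different from the colors of both degree-3 vertices of C_{c,d} for any c,d with a < c < d and c+d = a+b; consequently a message-passing GNN of depth a with injective aggregation distinguishes C_{a,b} from C_{c,d}. -/

import Mathlib

/-- Adjacency relation of a cycle on `Fin n`. -/
def cyc (n : ℕ) (i j : Fin n) : Prop :=
  i ≠ j ∧ ((i.val + 1) % n = j.val ∨ (j.val + 1) % n = i.val)

instance (n : ℕ) : DecidableRel (cyc n) := fun i j => by unfold cyc; infer_instance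

lemma cyc_symm {n : ℕ} {i j : Fin n} (h : cyc n i j) : cyc n j i :=
  ⟨h.1.symm, h.2.symm⟩

/-- Adjacency of `C_{a,b}`: two disjoint cycles joined by a bridge between vertex `0`
of each cycle. -/
def cAdj (a b : ℕ) (u v : Fin a ⊕ Fin b) : Prop :=
  (∃ i j, u = Sum.inl i ∧ v = Sum.inl j ∧ cyc a i j) ∨
  (∃ i j, u = Sum.inr i ∧ v = Sum.inr j ∧ cyc b i j) ∨
  (∃ i j, u = Sum.inl i ∧ v = Sum.inr j ∧ i.val = 0 ∧ j.val = 0) ∨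
  (∃ i j, u = Sum.inr i ∧ v = Sum.inl j ∧ i.val = 0 ∧ j.val = 0)

instance (a b : ℕ) : DecidableRel (cAdj a b) := fun u v => by unfold cAdj; infer_instance

/-- The graph `C_{a,b}`: disjoint cycles of lengths `a` and `b` joined by a single bridge. -/
def Cgraph (a b : ℕ) : SimpleGraph (Fin a ⊕ Fin b) where
  Adj := cAdj a b
  symm := by
    constructor
    intro u v h
    rcases h with ⟨i, j, rfl, rfl, hc⟩ | ⟨i, j, rfl, rfl, hc⟩ |
      ⟨i, j, rfl, rfl, hc⟩ | ⟨i, j, rfl, rfl, hc⟩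
    · exact Or.inl ⟨j, i, rfl, rfl, cyc_symm hc⟩
    · exact Or.inr (Or.inl ⟨j, i, rfl, rfl, cyc_symm hc⟩)
    · exact Or.inr (Or.inr (Or.inr ⟨j, i, rfl, rfl, hc.2, hc.1⟩))
    · exact Or.inr (Or.inr (Or.inl ⟨j, i, rfl, rfl, hc.2, hc.1⟩))
  loopless := by
    constructor
    intro u h
    rcases h with ⟨i, j, h1, h2, hc⟩ | ⟨i, j, h1, h2, hc⟩ |
      ⟨i, j, h1, h2, hc⟩ | ⟨i, j, h1, h2, hc⟩ <;> subst h1 <;> simp_all [cyc]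

instance (a b : ℕ) : DecidableRel (Cgraph a b).Adj :=
  fun u v => inferInstanceAs (Decidable (cAdj a b u v))

/-- Color space of the `k`-th round of 1-WL color refinement (initial colors are
natural numbers, e.g. degrees). -/
def WLType : ℕ → Type
  | 0 => ℕ
  | k + 1 => WLType k × Multiset (WLType k)

/-- 1-WL color refinement, initialized with vertex degrees: at each round the new
color of a vertex is the pair of its old color and the multiset of its
neighbors' old colors. -/
def wl {V : Type*} [Fintype V] [DecidableEq V] (G : SimpleGraph V)
    [DecidableRel G.Adj] : (k : ℕ) → V → WLType k
  | 0 => fun v => G.degree v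
  | k + 1 => fun v => (wl G k v, (G.neighborFinset v).val.map (wl G k))


instance instDecEqWL : (k : ℕ) → DecidableEq (WLType k)
  | 0 => inferInstanceAs (DecidableEq ℕ)
  | k+1 => letI := instDecEqWL k; inferInstanceAs (DecidableEq (WLType k × Multiset (WLType k)))


/-- `NBP k col prev` : from current color (round `k+1`) and previous vertex's round-`k`
color, there is a non-backtracking continuation of length `k+1` ending at a degree-3 vertex. -/
def NBP : (k : ℕ) → WLType (k+1) → WLType k → Prop
  | 0, cm, p => (3 : ℕ) ∈ cm.2.erase p
  | k+1, cm, p => ∃ q ∈ cm.2.erase p, NBP k q cm.1.1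

def StartP : (k : ℕ) → WLType k → Prop
  | 0, _ => False
  | 1, cm => (3 : ℕ) ∈ cm.2
  | (k+2), cm => ∃ q ∈ cm.2, NBP k q cm.1.1

/-- Existence of a non-backtracking walk of length `k+1` from `v` (first step ≠ `u`)
ending at a degree-3 vertex. -/
def NBW {V : Type*} [Fintype V] (G : SimpleGraph V) [DecidableRel G.Adj] :
    ℕ → V → V → Prop
  | 0, v, u => ∃ w, G.Adj v w ∧ w ≠ u ∧ G.degree w = 3
  | k+1, v, u => ∃ w, G.Adj v w ∧ w ≠ u ∧ NBW G k w v

variable {V : Type*} [Fintype V] [DecidableEq V] (G : SimpleGraph V) [DecidableRel G.Adj]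

lemma erase_map (k : ℕ) (v u : V) (h : G.Adj v u) :
    ((G.neighborFinset v).val.map (wl G k)).erase (wl G k u)
      = ((G.neighborFinset v).erase u).val.map (wl G k) := by
  rw [Finset.erase_val, ← Multiset.map_erase_of_mem]
  exact Finset.mem_val.mpr ((G.mem_neighborFinset v u).2 h)

lemma NBP_iff : ∀ (k : ℕ) (v u : V), G.Adj v u →
    (NBP k (wl G (k+1) v) (wl G k u) ↔ NBW G k v u) := by
  intro k
  induction k with
  | zero =>
    intro v u h
    show @id (WLType 0) (3:ℕ) ∈ ((G.neighborFinset v).val.map (wl G 0)).erase (wl G 0 u) ↔ _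
    rw [erase_map G 0 v u h]
    simp only [Multiset.mem_map, Finset.mem_val, Finset.mem_erase]
    constructor
    · rintro ⟨w, ⟨hwu, hw⟩, hdeg⟩
      exact ⟨w, (G.mem_neighborFinset v w).1 hw, hwu, hdeg⟩
    · rintro ⟨w, hadj, hwu, hdeg⟩
      exact ⟨w, ⟨hwu, (G.mem_neighborFinset v w).2 hadj⟩, hdeg⟩
  | succ k ih =>
    intro v u h
    show (∃ q ∈ ((G.neighborFinset v).val.map (wl G (k+1))).erase (wl G (k+1) u),
        NBP k q (wl G k v)) ↔ _
    rw [erase_map G (k+1) v u h]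
    simp only [Multiset.mem_map, Finset.mem_val, Finset.mem_erase]
    constructor
    · rintro ⟨q, ⟨w, ⟨hwu, hw⟩, rfl⟩, hnbp⟩
      have hadj := (G.mem_neighborFinset v w).1 hw
      exact ⟨w, hadj, hwu, (ih w v hadj.symm).1 hnbp⟩
    · rintro ⟨w, hadj, hwu, hnbw⟩
      exact ⟨wl G (k+1) w, ⟨w, ⟨hwu, (G.mem_neighborFinset v w).2 hadj⟩, rfl⟩,
        (ih w v hadj.symm).2 hnbw⟩

lemma StartP_iff (k : ℕ) (v : V) :
    StartP (k+2) (wl G (k+2) v) ↔ ∃ w, G.Adj v w ∧ NBW G k w v := by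
  show (∃ q ∈ (G.neighborFinset v).val.map (wl G (k+1)), NBP k q (wl G k v)) ↔ _
  simp only [Multiset.mem_map, Finset.mem_val]
  constructor
  · rintro ⟨q, ⟨w, hw, rfl⟩, hnbp⟩
    have hadj := (G.mem_neighborFinset v w).1 hw
    exact ⟨w, hadj, (NBP_iff G k w v hadj.symm).1 hnbp⟩
  · rintro ⟨w, hadj, hnbw⟩
    exact ⟨wl G (k+1) w, ⟨w, (G.mem_neighborFinset v w).2 hadj, rfl⟩,
      (NBP_iff G k w v hadj.symm).2 hnbw⟩

section Graph

variable {n m : ℕ}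

lemma cyc_cases {i j : Fin n} (h : cyc n i j) :
    (j.val = i.val + 1) ∨ (i.val + 1 = n ∧ j.val = 0) ∨
    (i.val = j.val + 1) ∨ (j.val + 1 = n ∧ i.val = 0) := by
  obtain ⟨hne, h | h⟩ := h
  · have hi := i.isLt; have hj := j.isLt
    rcases Nat.lt_or_ge (i.val + 1) n with hl | hg
    · rw [Nat.mod_eq_of_lt hl] at h; omega
    · have he : i.val + 1 = n := by omega
      rw [he, Nat.mod_self] at h; omega
  · have hi := i.isLt; have hj := j.isLt
    rcases Nat.lt_or_ge (j.val + 1) n with hl | hg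
    · rw [Nat.mod_eq_of_lt hl] at h; omega
    · have he : j.val + 1 = n := by omega
      rw [he, Nat.mod_self] at h; omega

lemma cyc_succ {i j : Fin n} (h : i.val + 1 = j.val) : cyc n i j := by
  refine ⟨fun e => by rw [e] at h; omega, Or.inl ?_⟩
  rw [h, Nat.mod_eq_of_lt j.isLt]

lemma cyc_wrap (hn : 1 < n) {i j : Fin n} (h : i.val + 1 = n) (h0 : j.val = 0) : cyc n i j := by
  refine ⟨fun e => by rw [e] at h; omega, Or.inl ?_⟩
  rw [h, Nat.mod_self, h0]

lemma adj_inl_inl {i j : Fin n} (h : cyc n i j) :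
    (Cgraph n m).Adj (.inl i) (.inl j) :=
  show cAdj n m _ _ from Or.inl ⟨i, j, rfl, rfl, h⟩

lemma adj_inr_inr {i j : Fin m} (h : cyc m i j) :
    (Cgraph n m).Adj (.inr i) (.inr j) :=
  show cAdj n m _ _ from Or.inr (Or.inl ⟨i, j, rfl, rfl, h⟩)

lemma adj_bridge_lr {i : Fin n} {j : Fin m} (h1 : i.val = 0) (h2 : j.val = 0) :
    (Cgraph n m).Adj (.inl i) (.inr j) :=
  show cAdj n m _ _ from Or.inr (Or.inr (Or.inl ⟨i, j, rfl, rfl, h1, h2⟩))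

lemma adj_bridge_rl {i : Fin m} {j : Fin n} (h1 : i.val = 0) (h2 : j.val = 0) :
    (Cgraph n m).Adj (.inr i) (.inl j) :=
  show cAdj n m _ _ from Or.inr (Or.inr (Or.inr ⟨i, j, rfl, rfl, h1, h2⟩))

lemma adj_inl_elim {i : Fin n} {w} (h : (Cgraph n m).Adj (.inl i) w) :
    (∃ j : Fin n, w = .inl j ∧ cyc n i j) ∨
    (i.val = 0 ∧ ∃ j : Fin m, w = .inr j ∧ j.val = 0) := by
  rcases h with ⟨i',j',h1,h2,hc⟩|⟨i',j',h1,h2,hc⟩|⟨i',j',h1,h2,hc1,hc2⟩|⟨i',j',h1,h2,hc1,hc2⟩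
  · injection h1 with h1; subst h1; exact Or.inl ⟨j', h2, hc⟩
  · simp at h1
  · injection h1 with h1; subst h1; exact Or.inr ⟨hc1, j', h2, hc2⟩
  · simp at h1

lemma adj_inr_elim {i : Fin m} {w} (h : (Cgraph n m).Adj (.inr i) w) :
    (∃ j : Fin m, w = .inr j ∧ cyc m i j) ∨
    (i.val = 0 ∧ ∃ j : Fin n, w = .inl j ∧ j.val = 0) := by
  rcases h with ⟨i',j',h1,h2,hc⟩|⟨i',j',h1,h2,hc⟩|⟨i',j',h1,h2,hc1,hc2⟩|⟨i',j',h1,h2,hc1,hc2⟩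
  · simp at h1
  · injection h1 with h1; subst h1; exact Or.inl ⟨j', h2, hc⟩
  · simp at h1
  · injection h1 with h1; subst h1; exact Or.inr ⟨hc1, j', h2, hc2⟩

lemma degree_inl0 (hn : 2 < n) (hm : 0 < m) {i : Fin n} (hi : i.val = 0) :
    (Cgraph n m).degree (.inl i) = 3 := by
  have hset : (Cgraph n m).neighborFinset (.inl i)
      = {.inl ⟨1, by omega⟩, .inl ⟨n-1, by omega⟩, .inr ⟨0, hm⟩} := by
    ext w
    rw [SimpleGraph.mem_neighborFinset]
    constructor
    · intro h
      rcases adj_inl_elim h with ⟨j, rfl, hc⟩ | ⟨_, j, rfl, hj⟩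
      · rcases cyc_cases hc with h' | ⟨h1, h2⟩ | h' | ⟨h1, h2⟩ <;>
          simp only [Finset.mem_insert, Finset.mem_singleton, Sum.inl.injEq, Sum.inr.injEq,
            Fin.ext_iff] <;> omega
      · simp only [Finset.mem_insert, Finset.mem_singleton, Sum.inl.injEq, Sum.inr.injEq,
          Fin.ext_iff]
        omega
    · intro h
      rcases Finset.mem_insert.1 h with rfl | h
      · exact adj_inl_inl (cyc_succ (show i.val + 1 = 1 by omega))
      rcases Finset.mem_insert.1 h with rfl | h
      · exact adj_inl_inl (cyc_symm (cyc_wrap (by omega) (show n - 1 + 1 = n by omega) hi))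
      rw [Finset.mem_singleton] at h; subst h
      exact adj_bridge_lr hi rfl
  rw [SimpleGraph.degree, hset]
  rw [Finset.card_insert_of_notMem (by simp [Fin.ext_iff]; omega),
    Finset.card_insert_of_notMem (by simp), Finset.card_singleton]

lemma degree_inl_ne (hn : 2 < n) {j : Fin n} (hj : j.val ≠ 0) :
    (Cgraph n m).degree (.inl j) ≠ 3 := by
  have hsub : (Cgraph n m).neighborFinset (.inl j)
      ⊆ {.inl ⟨(j.val+1) % n, Nat.mod_lt _ (by omega)⟩, .inl ⟨j.val - 1, by omega⟩} := by
    intro w hw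
    rw [SimpleGraph.mem_neighborFinset] at hw
    rcases adj_inl_elim hw with ⟨j', rfl, hc⟩ | ⟨h0, _⟩
    · have hj' := j'.isLt; have hjj := j.isLt
      rcases cyc_cases hc with h' | ⟨h1, h2⟩ | h' | ⟨h1, h2⟩ <;>
        simp only [Finset.mem_insert, Finset.mem_singleton, Sum.inl.injEq, Fin.ext_iff]
      · left; rw [Nat.mod_eq_of_lt (by omega)]; omega
      · left; rw [h1, Nat.mod_self]; omega
      · right; omega
      · omega
    · exact absurd h0 hj
  have hle : (Cgraph n m).degree (.inl j) ≤ 2 := by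
    refine le_trans (Finset.card_le_card hsub) ?_
    refine le_trans (Finset.card_insert_le _ _) ?_
    simp
  omega

lemma degree_inr_ne (hm : 2 < m) {j : Fin m} (hj : j.val ≠ 0) :
    (Cgraph n m).degree (.inr j) ≠ 3 := by
  have hsub : (Cgraph n m).neighborFinset (.inr j)
      ⊆ {.inr ⟨(j.val+1) % m, Nat.mod_lt _ (by omega)⟩, .inr ⟨j.val - 1, by omega⟩} := by
    intro w hw
    rw [SimpleGraph.mem_neighborFinset] at hw
    rcases adj_inr_elim hw with ⟨j', rfl, hc⟩ | ⟨h0, _⟩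
    · have hj' := j'.isLt; have hjj := j.isLt
      rcases cyc_cases hc with h' | ⟨h1, h2⟩ | h' | ⟨h1, h2⟩ <;>
        simp only [Finset.mem_insert, Finset.mem_singleton, Sum.inr.injEq, Fin.ext_iff]
      · left; rw [Nat.mod_eq_of_lt (by omega)]; omega
      · left; rw [h1, Nat.mod_self]; omega
      · right; omega
      · omega
    · exact absurd h0 hj
  have hle : (Cgraph n m).degree (.inr j) ≤ 2 := by
    refine le_trans (Finset.card_le_card hsub) ?_
    refine le_trans (Finset.card_insert_le _ _) ?_
    simp
  omega

end Graph


section Walks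

variable {n m : ℕ}

lemma NBW_zero {V : Type*} [Fintype V] (G : SimpleGraph V) [DecidableRel G.Adj] (v u : V) :
    NBW G 0 v u ↔ ∃ w, G.Adj v w ∧ w ≠ u ∧ G.degree w = 3 := Iff.rfl

lemma NBW_succ {V : Type*} [Fintype V] (G : SimpleGraph V) [DecidableRel G.Adj]
    (k : ℕ) (v u : V) :
    NBW G (k+1) v u ↔ ∃ w, G.Adj v w ∧ w ≠ u ∧ NBW G k w v := Iff.rfl

/-- Going forward around the `n`-cycle we reach the degree-3 vertex `inl 0` in exactly
the right number of steps. -/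
lemma walk_around (hn : 4 < n) (hm : 0 < m) :
    ∀ (k : ℕ) (j p : Fin n), p.val + 1 = j.val → j.val + (k+1) = n →
      NBW (Cgraph n m) k (.inl j) (.inl p) := by
  intro k
  induction k with
  | zero =>
    intro j p hp hj
    rw [NBW_zero]
    refine ⟨.inl ⟨0, by omega⟩, ?_, ?_, ?_⟩
    · exact adj_inl_inl (cyc_wrap (by omega) (by omega) rfl)
    · intro e
      injection e with e
      rw [Fin.ext_iff] at e
      have e' : (0 : ℕ) = p.val := e
      omega
    · exact degree_inl0 (by omega) hm rfl
  | succ k ih =>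
    intro j p hp hj
    rw [NBW_succ]
    refine ⟨.inl ⟨j.val + 1, by omega⟩, adj_inl_inl (cyc_succ rfl), ?_, ?_⟩
    · intro e
      injection e with e
      rw [Fin.ext_iff] at e
      have e' : j.val + 1 = p.val := e
      omega
    · exact ih ⟨j.val + 1, by omega⟩ j rfl (show j.val + 1 + (k+1) = n by omega)

/-- Moving away from `inl 0` on the `n`-cycle, with too few steps to come back:
no degree-3 vertex can be reached. -/
lemma no_walk_up :
    ∀ (k : ℕ) (j p : Fin n), p.val + 1 = j.val → j.val + (k+1) < n →
      ¬ NBW (Cgraph n m) k (.inl j) (.inl p) := by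
  intro k
  induction k with
  | zero =>
    rintro j p hp hj ⟨w, hadj, hne, hdeg⟩
    rcases adj_inl_elim hadj with ⟨j', rfl, hc⟩ | ⟨h0, _⟩
    · rcases cyc_cases hc with h' | ⟨h1, h2⟩ | h' | ⟨h1, h2⟩
      · exact degree_inl_ne (by omega) (by omega) hdeg
      · omega
      · exact hne (congrArg Sum.inl (Fin.ext (by omega)))
      · omega
    · omega
  | succ k ih =>
    rintro j p hp hj ⟨w, hadj, hne, hnbw⟩
    rcases adj_inl_elim hadj with ⟨j', rfl, hc⟩ | ⟨h0, _⟩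
    · rcases cyc_cases hc with h' | ⟨h1, h2⟩ | h' | ⟨h1, h2⟩
      · exact ih j' j (by omega) (by omega) hnbw
      · omega
      · exact hne (congrArg Sum.inl (Fin.ext (by omega)))
      · omega
    · omega

/-- Moving towards `inl 0` on the `n`-cycle, but with too few steps to get there:
no degree-3 vertex can be reached. -/
lemma no_walk_down :
    ∀ (k : ℕ) (j p : Fin n), p.val = (j.val + 1) % n → k + 1 < j.val →
      ¬ NBW (Cgraph n m) k (.inl j) (.inl p) := by
  intro k
  induction k with
  | zero =>
    rintro j p hp hj ⟨w, hadj, hne, hdeg⟩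
    have hjlt := j.isLt
    rcases adj_inl_elim hadj with ⟨j', rfl, hc⟩ | ⟨h0, _⟩
    · rcases cyc_cases hc with h' | ⟨h1, h2⟩ | h' | ⟨h1, h2⟩
      · refine hne (congrArg Sum.inl (Fin.ext ?_))
        have := j'.isLt
        rw [hp, Nat.mod_eq_of_lt (by omega)]; omega
      · exact hne (congrArg Sum.inl (Fin.ext (by rw [hp, h1, Nat.mod_self]; omega)))
      · exact degree_inl_ne (by omega) (by omega) hdeg
      · omega
    · omega
  | succ k ih =>
    rintro j p hp hj ⟨w, hadj, hne, hnbw⟩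
    have hjlt := j.isLt
    rcases adj_inl_elim hadj with ⟨j', rfl, hc⟩ | ⟨h0, _⟩
    · rcases cyc_cases hc with h' | ⟨h1, h2⟩ | h' | ⟨h1, h2⟩
      · refine absurd (congrArg Sum.inl (Fin.ext ?_)) hne
        have := j'.isLt
        rw [hp, Nat.mod_eq_of_lt (by omega)]; omega
      · exact hne (congrArg Sum.inl (Fin.ext (by rw [hp, h1, Nat.mod_self]; omega)))
      · exact ih j' j (by rw [Nat.mod_eq_of_lt (by omega)]; omega) (by omega) hnbw
      · omega
    · omega

lemma no_walk_up_r :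
    ∀ (k : ℕ) (j p : Fin m), p.val + 1 = j.val → j.val + (k+1) < m →
      ¬ NBW (Cgraph n m) k (.inr j) (.inr p) := by
  intro k
  induction k with
  | zero =>
    rintro j p hp hj ⟨w, hadj, hne, hdeg⟩
    rcases adj_inr_elim hadj with ⟨j', rfl, hc⟩ | ⟨h0, _⟩
    · rcases cyc_cases hc with h' | ⟨h1, h2⟩ | h' | ⟨h1, h2⟩
      · exact degree_inr_ne (by omega) (by omega) hdeg
      · omega
      · exact hne (congrArg Sum.inr (Fin.ext (by omega)))
      · omega
    · omega
  | succ k ih =>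
    rintro j p hp hj ⟨w, hadj, hne, hnbw⟩
    rcases adj_inr_elim hadj with ⟨j', rfl, hc⟩ | ⟨h0, _⟩
    · rcases cyc_cases hc with h' | ⟨h1, h2⟩ | h' | ⟨h1, h2⟩
      · exact ih j' j (by omega) (by omega) hnbw
      · omega
      · exact hne (congrArg Sum.inr (Fin.ext (by omega)))
      · omega
    · omega

lemma no_walk_down_r :
    ∀ (k : ℕ) (j p : Fin m), p.val = (j.val + 1) % m → k + 1 < j.val →
      ¬ NBW (Cgraph n m) k (.inr j) (.inr p) := by
  intro k
  induction k with
  | zero =>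
    rintro j p hp hj ⟨w, hadj, hne, hdeg⟩
    have hjlt := j.isLt
    rcases adj_inr_elim hadj with ⟨j', rfl, hc⟩ | ⟨h0, _⟩
    · rcases cyc_cases hc with h' | ⟨h1, h2⟩ | h' | ⟨h1, h2⟩
      · refine hne (congrArg Sum.inr (Fin.ext ?_))
        have := j'.isLt
        rw [hp, Nat.mod_eq_of_lt (by omega)]; omega
      · exact hne (congrArg Sum.inr (Fin.ext (by rw [hp, h1, Nat.mod_self]; omega)))
      · exact degree_inr_ne (by omega) (by omega) hdeg
      · omega
    · omega
  | succ k ih =>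
    rintro j p hp hj ⟨w, hadj, hne, hnbw⟩
    have hjlt := j.isLt
    rcases adj_inr_elim hadj with ⟨j', rfl, hc⟩ | ⟨h0, _⟩
    · rcases cyc_cases hc with h' | ⟨h1, h2⟩ | h' | ⟨h1, h2⟩
      · refine absurd (congrArg Sum.inr (Fin.ext ?_)) hne
        have := j'.isLt
        rw [hp, Nat.mod_eq_of_lt (by omega)]; omega
      · exact hne (congrArg Sum.inr (Fin.ext (by rw [hp, h1, Nat.mod_self]; omega)))
      · exact ih j' j (by rw [Nat.mod_eq_of_lt (by omega)]; omega) (by omega) hnbw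
      · omega
    · omega

end Walks

theorem WL_color_of_degree_three_vertex_differs (a b c d : ℕ)
    (ha : 4 < a) (hab : a < b) (hac : a < c) (hcd : c < d) (hsum : c + d = a + b) :
    wl (Cgraph a b) a (Sum.inl ⟨0, by omega⟩)
        ≠ wl (Cgraph c d) a (Sum.inl ⟨0, by omega⟩) ∧
    wl (Cgraph a b) a (Sum.inl ⟨0, by omega⟩)
        ≠ wl (Cgraph c d) a (Sum.inr ⟨0, by omega⟩) := by
  obtain ⟨k, rfl⟩ : ∃ k, a = k + 5 := ⟨a - 5, by omega⟩
  -- In `C_{a,b}` there is a non-backtracking walk of length `a` from the degree-3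
  -- vertex on the `a`-cycle ending at a degree-3 vertex (all the way around the cycle).
  have hT : StartP (k+5) (wl (Cgraph (k+5) b) (k+5) (Sum.inl ⟨0, by omega⟩)) := by
    refine (StartP_iff (Cgraph (k+5) b) (k+3) _).2 ?_
    refine ⟨.inl ⟨1, by omega⟩, adj_inl_inl (cyc_succ rfl), ?_⟩
    exact walk_around ha (by omega) (k+3) ⟨1, by omega⟩ ⟨0, by omega⟩ rfl
      (show 1 + (k+3+1) = k+5 by omega)
  -- In `C_{c,d}` there is no such walk from `inl 0`.
  have hF1 : ¬ StartP (k+5) (wl (Cgraph c d) (k+5) (Sum.inl ⟨0, by omega⟩)) := by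
    intro hS
    obtain ⟨w, hadj, hnbw⟩ := (StartP_iff (Cgraph c d) (k+3) _).1 hS
    rcases adj_inl_elim hadj with ⟨j, rfl, hc⟩ | ⟨h0, j, rfl, hj0⟩
    · rcases cyc_cases hc with h' | ⟨h1, h2⟩ | h' | ⟨h1, h2⟩
      · have hjv : j.val = 0 + 1 := h'
        exact no_walk_up (k+3) j ⟨0, by omega⟩ (show (0:ℕ) + 1 = j.val by omega)
          (by omega) hnbw
      · have hc1 : (0:ℕ) + 1 = c := h1
        omega
      · have hc1 : (0:ℕ) = j.val + 1 := h'
        omega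
      · exact no_walk_down (k+3) j ⟨0, by omega⟩
          (show (0:ℕ) = (j.val + 1) % c by rw [h1, Nat.mod_self])
          (show k+3+1 < j.val by have := j.isLt; omega) hnbw
    · rw [NBW_succ] at hnbw
      obtain ⟨w', hadj', hne', hnbw'⟩ := hnbw
      rcases adj_inr_elim hadj' with ⟨j', rfl, hc'⟩ | ⟨h0', i', rfl, hi'⟩
      · rcases cyc_cases hc' with h' | ⟨h1, h2⟩ | h' | ⟨h1, h2⟩
        · exact no_walk_up_r (k+2) j' j (by omega) (by omega) hnbw'
        · omega
        · omega
        · exact no_walk_down_r (k+2) j' j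
            (by rw [h1, Nat.mod_self, hj0])
            (show k+2+1 < j'.val by have := j'.isLt; omega) hnbw'
      · exact hne' (congrArg Sum.inl (Fin.ext (show i'.val = 0 from hi')))
  -- In `C_{c,d}` there is no such walk from `inr 0` either.
  have hF2 : ¬ StartP (k+5) (wl (Cgraph c d) (k+5) (Sum.inr ⟨0, by omega⟩)) := by
    intro hS
    obtain ⟨w, hadj, hnbw⟩ := (StartP_iff (Cgraph c d) (k+3) _).1 hS
    rcases adj_inr_elim hadj with ⟨j, rfl, hc⟩ | ⟨h0, j, rfl, hj0⟩
    · rcases cyc_cases hc with h' | ⟨h1, h2⟩ | h' | ⟨h1, h2⟩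
      · have hjv : j.val = 0 + 1 := h'
        exact no_walk_up_r (k+3) j ⟨0, by omega⟩ (show (0:ℕ) + 1 = j.val by omega)
          (by omega) hnbw
      · have hc1 : (0:ℕ) + 1 = d := h1
        omega
      · have hc1 : (0:ℕ) = j.val + 1 := h'
        omega
      · exact no_walk_down_r (k+3) j ⟨0, by omega⟩
          (show (0:ℕ) = (j.val + 1) % d by rw [h1, Nat.mod_self])
          (show k+3+1 < j.val by have := j.isLt; omega) hnbw
    · rw [NBW_succ] at hnbw
      obtain ⟨w', hadj', hne', hnbw'⟩ := hnbw
      rcases adj_inl_elim hadj' with ⟨j', rfl, hc'⟩ | ⟨h0', i', rfl, hi'⟩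
      · rcases cyc_cases hc' with h' | ⟨h1, h2⟩ | h' | ⟨h1, h2⟩
        · exact no_walk_up (k+2) j' j (by omega) (by omega) hnbw'
        · omega
        · omega
        · exact no_walk_down (k+2) j' j
            (by rw [h1, Nat.mod_self, hj0])
            (show k+2+1 < j'.val by have := j'.isLt; omega) hnbw'
      · exact hne' (congrArg Sum.inr (Fin.ext (show i'.val = 0 from hi')))
  constructor
  · intro heq
    exact hF1 (heq ▸ hT)
  · intro heq
    exact hF2 (heq ▸ hT)
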